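/- For an odd prime r, the partial derivative with respect to x of H(x,z) = z^{r-1}·x·h((x/z)^2 + 2) equals z^{r-1}·r·h(ix/z)·h(-ix/z), where i is a primitive fourth root of unity. -/

import Mathlib

open Polynomial Finset Complex

section
variable {m : ℕ} {ζ : ℂ} (hζ : IsPrimitiveRoot ζ (2 * m + 1))

lemma prod_range_sub_aux {r : ℕ} (hr : 0 < r) {ζ : ℂ} (hζ : IsPrimitiveRoot ζ r)
    (s : ℂ) : ∏ k ∈ range r, (s - ζ ^ k) = s ^ r - 1 := by
  have : NeZero r := ⟨hr.ne'⟩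
  have h2 : eval s ((X : ℂ[X]) ^ r - 1) = eval s (∏ η ∈ nthRootsFinset r (1 : ℂ), (X - C η)) := by
    rw [← X_pow_sub_one_eq_prod hr hζ]
  simp only [eval_sub, eval_pow, eval_X, eval_one, eval_prod, eval_C] at h2
  rw [h2]
  apply Finset.prod_nbij (fun k => ζ ^ k)
  · intro k _
    exact (Polynomial.mem_nthRootsFinset hr (1 : ℂ)).2 (by rw [← pow_mul, mul_comm, pow_mul, hζ.pow_eq_one, one_pow])
  · intro a ha b hb hab
    exact hζ.pow_inj (mem_range.1 (by simpa using ha)) (mem_range.1 (by simpa using hb)) hab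
  · intro η hη
    obtain ⟨i, hi, rfl⟩ := hζ.eq_pow_of_pow_eq_one ((Polynomial.mem_nthRootsFinset hr (1 : ℂ)).1 (by simpa using hη))
    exact ⟨i, by simpa using mem_range.2 hi, rfl⟩
  · intro k _; rfl

/-- splitting off k = 0 -/
lemma prod_Icc_sub (hζ : IsPrimitiveRoot ζ (2 * m + 1)) (c : ℂ) :
    (c - 1) * ∏ k ∈ Icc 1 (2 * m), (c - ζ ^ k) = c ^ (2 * m + 1) - 1 := by
  have h := prod_range_sub_aux (Nat.succ_pos _) hζ c
  rw [Finset.prod_range_succ'] at h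
  have e : ∏ k ∈ Icc 1 (2 * m), (c - ζ ^ k) = ∏ i ∈ range (2 * m), (c - ζ ^ (i + 1)) := by
    apply Finset.prod_nbij (fun k => k - 1)
    · intro j hj; simp only [Finset.mem_coe, coe_range, Set.mem_Iio, mem_Icc, mem_range] at *; omega
    · intro a ha b hb hab; dsimp only at hab; simp only [Finset.mem_coe, mem_Icc] at *; omega
    · intro k hk; simp only [Finset.coe_Icc, Set.mem_Icc, Set.mem_image, Finset.mem_coe,
        coe_range, Set.mem_Iio, mem_range] at *
      exact ⟨k + 1, by omega, by omega⟩
    · intro j hj; simp only [mem_Icc] at hj; congr 2; omega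
  simp only [Nat.succ_eq_add_one] at h
  rw [e, pow_zero] at *
  linear_combination h

lemma prod_Icc_add (hζ : IsPrimitiveRoot ζ (2 * m + 1)) (c : ℂ) :
    (c + 1) * ∏ k ∈ Icc 1 (2 * m), (c + ζ ^ k) = c ^ (2 * m + 1) + 1 := by
  have h := prod_Icc_sub hζ (-c)
  have h2 : ∏ k ∈ Icc 1 (2 * m), (-c - ζ ^ k) = ∏ k ∈ Icc 1 (2 * m), (-1) * (c + ζ ^ k) := by
    apply Finset.prod_congr rfl; intro k _; ring
  rw [h2, Finset.prod_mul_distrib, Finset.prod_const, Nat.card_Icc] at h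
  have hcard : (-1 : ℂ) ^ (2 * m + 1 - 1) = 1 := by
    rw [show 2 * m + 1 - 1 = 2 * m from rfl, pow_mul]; norm_num
  rw [hcard, one_mul] at h
  have hodd : (-c) ^ (2 * m + 1) = -(c ^ (2 * m + 1)) := by
    rw [Odd.neg_pow ⟨m, by ring⟩]
  linear_combination -h - hodd

/-- combinatorial reindex: j and (2m+1) - j -/
lemma prod_reindex_refl (F : ℕ → ℂ) :
    (∏ j ∈ Icc 1 m, F j) * ∏ j ∈ Icc 1 m, F (2 * m + 1 - j) =
      ∏ k ∈ Icc 1 (2 * m), F k := by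
  have h1 : ∏ j ∈ Icc 1 m, F (2 * m + 1 - j) = ∏ k ∈ Icc (m + 1) (2 * m), F k := by
    apply Finset.prod_nbij (fun j => 2 * m + 1 - j)
    · intro j hj; simp only [mem_Icc] at *; omega
    · intro a ha b hb hab; dsimp only at hab; simp only [Finset.mem_coe, mem_Icc] at *; omega
    · intro k hk; simp only [Finset.coe_Icc, Set.mem_Icc, Set.mem_image] at *
      exact ⟨2 * m + 1 - k, by omega, by omega⟩
    · intro j _; rfl
  rw [h1, show Icc 1 m = Ico 1 (m+1) from rfl,
    show Icc (m+1) (2*m) = Ico (m+1) (2*m+1) from by ext k; simp,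
    show Icc 1 (2*m) = Ico 1 (2*m+1) from by ext k; simp]
  exact Finset.prod_Ico_consecutive _ (by omega) (by omega)

/-- combinatorial reindex: 2j (even) and (2m+1) - 2j (odd) -/
lemma prod_reindex_double (F : ℕ → ℂ) :
    (∏ j ∈ Icc 1 m, F (2 * j)) * ∏ j ∈ Icc 1 m, F (2 * m + 1 - 2 * j) =
      ∏ k ∈ Icc 1 (2 * m), F k := by
  classical
  have h1 : ∏ j ∈ Icc 1 m, F (2 * j) = ∏ k ∈ (Icc 1 (2 * m)).filter (fun k => k % 2 = 0), F k := by
    apply Finset.prod_nbij (fun j => 2 * j)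
    · intro j hj; simp only [mem_Icc, mem_filter] at *; omega
    · intro a ha b hb hab; dsimp only at hab; omega
    · intro k hk; simp only [Finset.coe_filter, mem_Icc, Set.mem_image, Finset.mem_coe,
        Set.mem_setOf_eq] at *
      exact ⟨k / 2, by omega, by omega⟩
    · intro j _; rfl
  have h2 : ∏ j ∈ Icc 1 m, F (2 * m + 1 - 2 * j)
      = ∏ k ∈ (Icc 1 (2 * m)).filter (fun k => ¬ k % 2 = 0), F k := by
    apply Finset.prod_nbij (fun j => 2 * m + 1 - 2 * j)
    · intro j hj; simp only [mem_Icc, mem_filter] at *; omega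
    · intro a ha b hb hab; dsimp only at hab; simp only [Finset.mem_coe, mem_Icc] at *; omega
    · intro k hk; simp only [Finset.coe_filter, mem_Icc, Set.mem_image, Finset.mem_coe,
        Set.mem_setOf_eq] at *
      exact ⟨(2 * m + 1 - k) / 2, by omega, by omega⟩
    · intro j _; rfl
  rw [h1, h2]
  exact Finset.prod_filter_mul_prod_filter_not _ _ _

lemma E1 (hζ : IsPrimitiveRoot ζ (2 * m + 1)) {t : ℂ} (ht : t ≠ 0) :
    t ^ (2 * m + 1) * ((t - t⁻¹) * ∏ j ∈ Icc 1 m, ((t - t⁻¹) ^ 2 + 2 - (ζ ^ j + ζ⁻¹ ^ j))) =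
      (t ^ 2) ^ (2 * m + 1) - 1 := by
  have key : ∀ j ∈ Icc 1 m, t ^ 2 * ((t - t⁻¹) ^ 2 + 2 - (ζ ^ j + ζ⁻¹ ^ j)) =
      (t ^ 2 - ζ ^ j) * (t ^ 2 - ζ ^ (2 * m + 1 - j)) := by
    intro j hj
    simp only [mem_Icc] at hj
    have hab : ζ ^ j * ζ ^ (2 * m + 1 - j) = 1 := by
      rw [← pow_add, show j + (2 * m + 1 - j) = 2 * m + 1 by omega, hζ.pow_eq_one]
    have hinv : ζ⁻¹ ^ j = ζ ^ (2 * m + 1 - j) := by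
      rw [inv_pow]; exact inv_eq_of_mul_eq_one_right hab
    rw [hinv]
    have hu : t * t⁻¹ = 1 := mul_inv_cancel₀ ht
    linear_combination (-2*t^2 + t*t⁻¹ + 1) * hu - hab
  have hpow : t ^ (2 * m) = ∏ _j ∈ Icc 1 m, t ^ 2 := by
    rw [Finset.prod_const, Nat.card_Icc, show m + 1 - 1 = m from rfl, ← pow_mul, mul_comm]
  calc t ^ (2 * m + 1) * ((t - t⁻¹) * ∏ j ∈ Icc 1 m, ((t - t⁻¹) ^ 2 + 2 - (ζ ^ j + ζ⁻¹ ^ j)))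
      = (t * (t - t⁻¹)) * (t ^ (2 * m) *
          ∏ j ∈ Icc 1 m, ((t - t⁻¹) ^ 2 + 2 - (ζ ^ j + ζ⁻¹ ^ j))) := by ring
    _ = (t ^ 2 - 1) * ∏ j ∈ Icc 1 m, ((t ^ 2 - ζ ^ j) * (t ^ 2 - ζ ^ (2 * m + 1 - j))) := by
        rw [hpow, ← Finset.prod_mul_distrib, Finset.prod_congr rfl key]
        congr 1
        field_simp
    _ = (t ^ 2 - 1) * ∏ k ∈ Icc 1 (2 * m), (t ^ 2 - ζ ^ k) := by
        rw [Finset.prod_mul_distrib, prod_reindex_refl]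
    _ = (t ^ 2) ^ (2 * m + 1) - 1 := prod_Icc_sub hζ _

lemma E2 (hζ : IsPrimitiveRoot ζ (2 * m + 1)) {t : ℂ} (ht : t ≠ 0) :
    (t ^ 2 + 1) * (t ^ (2 * m) *
        ((∏ j ∈ Icc 1 m, (I * (t - t⁻¹) - (ζ ^ j + ζ⁻¹ ^ j))) *
          ∏ j ∈ Icc 1 m, (-I * (t - t⁻¹) - (ζ ^ j + ζ⁻¹ ^ j)))) =
      (t ^ 2) ^ (2 * m + 1) + 1 := by
  have key : ∀ j ∈ Icc 1 m, t ^ 2 * ((I * (t - t⁻¹) - (ζ ^ j + ζ⁻¹ ^ j)) *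
      (-I * (t - t⁻¹) - (ζ ^ j + ζ⁻¹ ^ j))) =
      (t ^ 2 + ζ ^ (2 * j)) * (t ^ 2 + ζ ^ (2 * m + 1 - 2 * j)) := by
    intro j hj
    simp only [mem_Icc] at hj
    have hab : ζ ^ j * ζ ^ (2 * m + 1 - j) = 1 := by
      rw [← pow_add, show j + (2 * m + 1 - j) = 2 * m + 1 by omega, hζ.pow_eq_one]
    have hinv : ζ⁻¹ ^ j = ζ ^ (2 * m + 1 - j) := by
      rw [inv_pow]; exact inv_eq_of_mul_eq_one_right hab
    have hc : ζ ^ (2 * j) = (ζ ^ j) ^ 2 := by rw [← pow_mul, mul_comm]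
    have hd : ζ ^ (2 * m + 1 - 2 * j) = (ζ ^ (2 * m + 1 - j)) ^ 2 := by
      rw [← pow_mul, show (2 * m + 1 - j) * 2 = (2 * m + 1) + (2 * m + 1 - 2 * j) by omega,
        pow_add, hζ.pow_eq_one, one_mul]
    rw [hinv, hc, hd]
    have hI : (I : ℂ) ^ 2 = -1 := Complex.I_sq
    have hu : t * t⁻¹ = 1 := mul_inv_cancel₀ ht
    linear_combination (-(t^2*(t - t⁻¹)^2)) * hI + ((t*t⁻¹+1) - 2*t^2) * hu +
      (2*t^2 - (ζ^j*ζ^(2*m+1-j) + 1)) * hab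
  have hpow : t ^ (2 * m) = ∏ _j ∈ Icc 1 m, t ^ 2 := by
    rw [Finset.prod_const, Nat.card_Icc, show m + 1 - 1 = m from rfl, ← pow_mul, mul_comm]
  calc (t ^ 2 + 1) * (t ^ (2 * m) *
        ((∏ j ∈ Icc 1 m, (I * (t - t⁻¹) - (ζ ^ j + ζ⁻¹ ^ j))) *
          ∏ j ∈ Icc 1 m, (-I * (t - t⁻¹) - (ζ ^ j + ζ⁻¹ ^ j))))
      = (t ^ 2 + 1) * ∏ j ∈ Icc 1 m,
          ((t ^ 2 + ζ ^ (2 * j)) * (t ^ 2 + ζ ^ (2 * m + 1 - 2 * j))) := by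
        rw [hpow, ← Finset.prod_mul_distrib, ← Finset.prod_mul_distrib,
          Finset.prod_congr rfl key]
    _ = (t ^ 2 + 1) * ∏ k ∈ Icc 1 (2 * m), (t ^ 2 + ζ ^ k) := by
        rw [Finset.prod_mul_distrib]
        congr 1
        exact prod_reindex_double (fun k => t ^ 2 + ζ ^ k)
    _ = (t ^ 2) ^ (2 * m + 1) + 1 := prod_Icc_add hζ _

noncomputable def Pp (m : ℕ) (ζ : ℂ) : Polynomial ℂ :=
  X * ∏ j ∈ Icc 1 m, (X ^ 2 + C (2 - (ζ ^ j + ζ⁻¹ ^ j)))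

noncomputable def Qq (m : ℕ) (ζ : ℂ) : Polynomial ℂ :=
  C ((2 * m + 1 : ℕ) : ℂ) * ((∏ j ∈ Icc 1 m, (C I * X - C (ζ ^ j + ζ⁻¹ ^ j))) *
    ∏ j ∈ Icc 1 m, (-(C I) * X - C (ζ ^ j + ζ⁻¹ ^ j)))

lemma eval_Pp (u : ℂ) :
    eval u (Pp m ζ) = u * ∏ j ∈ Icc 1 m, (u ^ 2 + 2 - (ζ ^ j + ζ⁻¹ ^ j)) := by
  simp only [Pp, eval_mul, eval_X, eval_prod, eval_add, eval_pow, eval_C]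
  congr 1
  exact Finset.prod_congr rfl fun j _ => by ring

lemma eval_Qq (u : ℂ) :
    eval u (Qq m ζ) = ((2 * m + 1 : ℕ) : ℂ) *
      ((∏ j ∈ Icc 1 m, (I * u - (ζ ^ j + ζ⁻¹ ^ j))) *
        ∏ j ∈ Icc 1 m, (-I * u - (ζ ^ j + ζ⁻¹ ^ j))) := by
  simp only [Qq, eval_mul, eval_prod, eval_sub, eval_neg, eval_X, eval_C]

lemma pointwise (hζ : IsPrimitiveRoot ζ (2 * m + 1)) {t : ℂ} (ht : t ≠ 0)
    (ht2 : t ^ 2 + 1 ≠ 0) :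
    eval (t - t⁻¹) (derivative (Pp m ζ)) = eval (t - t⁻¹) (Qq m ζ) := by
  set n := 2 * m + 1 with hn
  have htn : t ^ n ≠ 0 := pow_ne_zero _ ht
  have hφ : HasDerivAt (fun s : ℂ => s - s⁻¹) (1 - -(t ^ 2)⁻¹) t :=
    (hasDerivAt_id t).sub (hasDerivAt_inv ht)
  have hg : HasDerivAt (fun u : ℂ => eval u (Pp m ζ))
      (eval (t - t⁻¹) (derivative (Pp m ζ))) (t - t⁻¹) := (Pp m ζ).hasDerivAt _
  have hcomp := hg.comp t hφ
  have heq : ((fun u : ℂ => eval u (Pp m ζ)) ∘ (fun s : ℂ => s - s⁻¹)) =ᶠ[nhds t]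
      fun s : ℂ => s ^ n - (s ^ n)⁻¹ := by
    filter_upwards [compl_singleton_mem_nhds ht] with s hs
    have hs0 : s ≠ 0 := hs
    have h := E1 hζ (t := s) hs0
    have hsn : s ^ n ≠ 0 := pow_ne_zero _ hs0
    have key : s ^ n * eval (s - s⁻¹) (Pp m ζ) = (s ^ n) ^ 2 - 1 := by
      rw [eval_Pp]
      calc s ^ n * ((s - s⁻¹) * ∏ j ∈ Icc 1 m, ((s - s⁻¹) ^ 2 + 2 - (ζ ^ j + ζ⁻¹ ^ j)))
          = (s ^ 2) ^ n - 1 := h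
        _ = (s ^ n) ^ 2 - 1 := by rw [← pow_mul, ← pow_mul, mul_comm]
    show eval (s - s⁻¹) (Pp m ζ) = s ^ n - (s ^ n)⁻¹
    apply mul_right_cancel₀ hsn
    have h2 : (s ^ n - (s ^ n)⁻¹) * s ^ n = (s ^ n) ^ 2 - 1 := by
      linear_combination (-1 : ℂ) * inv_mul_cancel₀ hsn
    rw [h2]
    linear_combination key
  have hψ : HasDerivAt (fun s : ℂ => s ^ n - (s ^ n)⁻¹)
      ((n : ℂ) * t ^ (n - 1) - -((n : ℂ) * t ^ (n - 1)) / (t ^ n) ^ 2) t :=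
    (hasDerivAt_pow n t).sub ((hasDerivAt_pow n t).inv htn)
  have hψ' := hcomp.congr_of_eventuallyEq heq.symm
  have hDt := hψ'.unique hψ
  -- hDt : eval (t - t⁻¹) (derivative (Pp m ζ)) * (1 - -(t ^ 2)⁻¹) = ...
  have hE2 := E2 hζ (t := t) ht
  rw [eval_Qq]
  have hne : (t ^ 2 + 1) * t ^ (2 * m) ≠ 0 := mul_ne_zero ht2 (pow_ne_zero _ ht)
  apply mul_right_cancel₀ hne
  have hm1 : n - 1 = 2 * m := by omega
  rw [hm1] at hDt
  have expand : ((2 * m + 1 : ℕ) : ℂ) *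
      ((∏ j ∈ Icc 1 m, (I * (t - t⁻¹) - (ζ ^ j + ζ⁻¹ ^ j))) *
        ∏ j ∈ Icc 1 m, (-I * (t - t⁻¹) - (ζ ^ j + ζ⁻¹ ^ j))) * ((t ^ 2 + 1) * t ^ (2 * m)) =
      ((2 * m + 1 : ℕ) : ℂ) * ((t ^ 2) ^ n + 1) := by
    linear_combination ((2 * m + 1 : ℕ) : ℂ) * hE2
  rw [expand]
  -- remains: eval (t - t⁻¹) (derivative (Pp m ζ)) * ((t ^ 2 + 1) * t ^ (2 * m)) = n * ((t²)^n + 1)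
  rw [show ((2 * m + 1 : ℕ) : ℂ) * ((t ^ 2) ^ n + 1) = ((n : ℕ) : ℂ) * ((t ^ 2) ^ n + 1) from rfl]
  set D := eval (t - t⁻¹) (derivative (Pp m ζ)) with hD
  apply mul_right_cancel₀ (pow_ne_zero 2 htn)
  have e1 : t ^ 2 * (t ^ 2)⁻¹ = 1 := mul_inv_cancel₀ (pow_ne_zero _ ht)
  have e2 : (t ^ n) ^ 2 * ((t ^ n) ^ 2)⁻¹ = 1 := mul_inv_cancel₀ (pow_ne_zero _ htn)
  simp only [hn] at hDt e2 ⊢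
  linear_combination (t ^ 2 * t ^ (2 * m) * ((t ^ (2 * m + 1)) ^ 2)) * hDt -
    (D * t ^ (2 * m) * (t ^ (2 * m + 1)) ^ 2) * e1 +
    (((2 * m + 1 : ℕ) : ℂ) * (t ^ (2 * m + 1)) ^ 2) * e2

lemma deriv_Pp_eq_Qq (hζ : IsPrimitiveRoot ζ (2 * m + 1)) :
    derivative (Pp m ζ) = Qq m ζ := by
  apply Polynomial.eq_of_infinite_eval_eq
  apply Set.Infinite.mono (s := (fun t : ℝ => ((t : ℂ) - (t : ℂ)⁻¹)) '' Set.Ioi 1)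
  · rintro u ⟨t, ht, rfl⟩
    simp only [Set.mem_Ioi] at ht
    have ht0 : (t : ℂ) ≠ 0 := by
      simp only [ne_eq, Complex.ofReal_eq_zero]; linarith
    have ht2 : (t : ℂ) ^ 2 + 1 ≠ 0 := by
      have : ((t ^ 2 + 1 : ℝ) : ℂ) = (t : ℂ) ^ 2 + 1 := by push_cast; ring
      rw [← this]
      simp only [ne_eq, Complex.ofReal_eq_zero]
      nlinarith
    exact pointwise hζ ht0 ht2
  · apply Set.Infinite.image
    · intro a ha b hb hab
      simp only [Set.mem_Ioi] at ha hb
      have hcast : ((a - a⁻¹ : ℝ) : ℂ) = ((b - b⁻¹ : ℝ) : ℂ) := by push_cast; exact hab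
      have h : a - a⁻¹ = b - b⁻¹ := Complex.ofReal_inj.1 hcast
      have ha0 : (0 : ℝ) < a := by linarith
      have hb0 : (0 : ℝ) < b := by linarith
      have h2 : (a - b) * (a * b + 1) = 0 := by
        have e1 : a * a⁻¹ = 1 := mul_inv_cancel₀ ha0.ne'
        have e2 : b * b⁻¹ = 1 := mul_inv_cancel₀ hb0.ne'
        have h3 : (a - a⁻¹) * (a * b) = (b - b⁻¹) * (a * b) := by rw [h]
        linear_combination h3 + b * e1 - a * e2
      rcases mul_eq_zero.1 h2 with h4 | h4
      · linarith
      · nlinarith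
    · exact Set.Ioi_infinite 1

/-- For an odd prime `r`, the derivative with respect to `x` of
`H(x,z) = z^(r-1)·x·h((x/z)² + 2)` equals `z^(r-1)·r·h(ix/z)·h(-ix/z)`, where
`h(x) = ∏_{j=1}^{(r-1)/2} (x - ω_j)`, `ω_j = ζ_r^j + ζ_r^{-j}`, and `i² = -1`. -/
theorem deriv_H_eq (r : ℕ) (hr : r.Prime) (hodd : Odd r)
    (ζ : ℂ) (hζ : IsPrimitiveRoot ζ r) (z : ℂ) (hz : z ≠ 0) (x : ℂ) :
    deriv (fun x : ℂ => z ^ (r - 1) * x *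
        ∏ j ∈ Finset.Icc 1 ((r - 1) / 2), ((x / z) ^ 2 + 2 - (ζ ^ j + ζ⁻¹ ^ j))) x =
      z ^ (r - 1) * r *
        (∏ j ∈ Finset.Icc 1 ((r - 1) / 2), (Complex.I * x / z - (ζ ^ j + ζ⁻¹ ^ j))) *
        (∏ j ∈ Finset.Icc 1 ((r - 1) / 2), (-Complex.I * x / z - (ζ ^ j + ζ⁻¹ ^ j))) := by
  obtain ⟨m, hm⟩ := hodd
  have hm' : r = 2 * m + 1 := by omega
  subst hm'
  simp only [show 2 * m + 1 - 1 = 2 * m from by omega, show (2 * m + 1 - 1) / 2 = m from by omega, show 2 * m / 2 = m from by omega]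
  have hfun : (fun x : ℂ => z ^ (2 * m) * x *
      ∏ j ∈ Finset.Icc 1 m, ((x / z) ^ 2 + 2 - (ζ ^ j + ζ⁻¹ ^ j))) =
      fun x : ℂ => z ^ (2 * m + 1) * eval (x / z) (Pp m ζ) := by
    funext y
    rw [eval_Pp]
    rw [pow_succ]
    field_simp
    ring
  rw [hfun]
  have h1 : HasDerivAt (fun x : ℂ => x / z) z⁻¹ x := by
    simpa using (hasDerivAt_id x).div_const z
  have hD : HasDerivAt (fun x : ℂ => z ^ (2 * m + 1) * eval (x / z) (Pp m ζ))
      (z ^ (2 * m + 1) * (eval (x / z) (derivative (Pp m ζ)) * z⁻¹)) x :=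
    (((Pp m ζ).hasDerivAt (x / z)).comp x h1).const_mul _
  rw [hD.deriv, deriv_Pp_eq_Qq hζ, eval_Qq]
  simp only [mul_div_assoc]
  have hzz : z ^ (2 * m + 1) * z⁻¹ = z ^ (2 * m) := by
    rw [pow_succ]
    field_simp
  linear_combination (((2 * m + 1 : ℕ) : ℂ) *
    (∏ j ∈ Finset.Icc 1 m, (I * (x / z) - (ζ ^ j + ζ⁻¹ ^ j))) *
    (∏ j ∈ Finset.Icc 1 m, (-I * (x / z) - (ζ ^ j + ζ⁻¹ ^ j)))) * hzz

end
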